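/- arXiv:0806.1360 — 2 statements merged into one kernel-verified Lean document; each statement's English description precedes it below -/
import Mathlib

section
/- Let κ, τ, φ : ℝ² → ℝ be smooth (C^∞) functions of (t,x) with κ(t,x) > 0 for all (t,x), satisfying ∂_x φ = τ, ∂_t φ = -(∂_x²τ + 3κ^{-1}∂_x(τ ∂_x κ) + (3/2)τκ² - τ³), and the mKdV-flow curvature equation -∂_t κ = ∂_x³κ + (3/2)(κ² - 2τ²)∂_x κ - 3κτ ∂_x τ. Then the complex-valued function u(t,x) := κ(t,x) e^{iφ(t,x)} satisfies the complex modified Korteweg–de Vries equation -∂_t u = ∂_x³ u + (3/2)|u|² ∂_x u. -/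
noncomputable section

/-- Partial derivative with respect to the first variable `t`. -/
def pt {E : Type*} [NormedAddCommGroup E] [NormedSpace ℝ E]
    (f : ℝ × ℝ → E) : ℝ × ℝ → E := fun p => deriv (fun s => f (s, p.2)) p.1

/-- Partial derivative with respect to the second variable `x`. -/
def px {E : Type*} [NormedAddCommGroup E] [NormedSpace ℝ E]
    (f : ℝ × ℝ → E) : ℝ × ℝ → E := fun p => deriv (fun s => f (p.1, s)) p.2

lemma hasDerivAt_px {E : Type*} [NormedAddCommGroup E] [NormedSpace ℝ E]
    (f : ℝ × ℝ → E) (hf : Differentiable ℝ f) (p : ℝ × ℝ) :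
    HasDerivAt (fun s => f (p.1, s)) (px f p) p.2 := by
  have h : DifferentiableAt ℝ (fun s => f (p.1, s)) p.2 :=
    (hf.comp ((differentiable_const p.1).prodMk differentiable_id)).differentiableAt
  exact h.hasDerivAt

lemma hasDerivAt_pt {E : Type*} [NormedAddCommGroup E] [NormedSpace ℝ E]
    (f : ℝ × ℝ → E) (hf : Differentiable ℝ f) (p : ℝ × ℝ) :
    HasDerivAt (fun s => f (s, p.2)) (pt f p) p.1 := by
  have h : DifferentiableAt ℝ (fun s => f (s, p.2)) p.1 :=
    (hf.comp (differentiable_id.prodMk (differentiable_const p.2))).differentiableAt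
  exact h.hasDerivAt

lemma contDiff_px (f : ℝ × ℝ → ℝ) (hf : ContDiff ℝ (⊤ : ℕ∞) f) :
    ContDiff ℝ (⊤ : ℕ∞) (px f) := by
  have h : px f = fun p => fderiv ℝ f p (0, 1) := by
    funext p
    have h1 : HasDerivAt (fun s : ℝ => (p.1, s)) ((0 : ℝ), (1 : ℝ)) p.2 :=
      (hasDerivAt_const _ _).prodMk (hasDerivAt_id _)
    have h2 := ((hf.differentiable (by simp))
      (p.1, p.2)).hasFDerivAt.comp_hasDerivAt p.2 h1
    simpa [px, Function.comp_def] using h2.deriv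
  rw [h]
  exact (hf.fderiv_right (by exact_mod_cast le_top)).clm_apply contDiff_const

/-- The Hasimoto transformation `u = κ e^{iφ}` maps solutions of the
mKdV-flow curvature/torsion equations to solutions of the complex
modified Korteweg–de Vries equation `-u_t = u_xxx + (3/2)|u|² u_x`. -/
theorem hasimoto_transformation_mKdV
    (κ τ φ : ℝ × ℝ → ℝ)
    (hκ : ContDiff ℝ (⊤ : ℕ∞) κ) (hτ : ContDiff ℝ (⊤ : ℕ∞) τ)
    (hφ : ContDiff ℝ (⊤ : ℕ∞) φ)
    (hκpos : ∀ p, 0 < κ p)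
    (hφx : ∀ p, px φ p = τ p)
    (hφt : ∀ p, pt φ p
      = -(px (px τ) p + 3 * (κ p)⁻¹ * px (fun q => τ q * px κ q) p
          + (3 / 2) * τ p * (κ p) ^ 2 - (τ p) ^ 3))
    (hκt : ∀ p, -pt κ p
      = px (px (px κ)) p + (3 / 2) * ((κ p) ^ 2 - 2 * (τ p) ^ 2) * px κ p
        - 3 * κ p * τ p * px τ p)
    (u : ℝ × ℝ → ℂ)
    (hu : ∀ p, u p = (κ p : ℂ) * Complex.exp (Complex.I * (φ p : ℂ))) :
    ∀ p, -pt u p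
      = px (px (px u)) p + (3 / 2) * (‖u p‖ : ℂ) ^ 2 * px u p := by
  have hu' : u = fun p => (κ p : ℂ) * Complex.exp (Complex.I * (φ p : ℂ)) := funext hu
  subst hu'
  have hle : ((⊤ : ℕ∞) : WithTop ℕ∞) ≠ 0 := by simp
  have hκ1 := contDiff_px κ hκ
  have hκ2 := contDiff_px _ hκ1
  have hτ1 := contDiff_px τ hτ
  have Dκ := hasDerivAt_px κ (hκ.differentiable hle)
  have Dκ1 := hasDerivAt_px (px κ) (hκ1.differentiable hle)
  have Dκ2 := hasDerivAt_px (px (px κ)) (hκ2.differentiable hle)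
  have Dτ := hasDerivAt_px τ (hτ.differentiable hle)
  have Dτ1 := hasDerivAt_px (px τ) (hτ1.differentiable hle)
  have Dφ := hasDerivAt_px φ (hφ.differentiable hle)
  have Tκ := hasDerivAt_pt κ (hκ.differentiable hle)
  have Tφ := hasDerivAt_pt φ (hφ.differentiable hle)
  -- x-derivative of the exponential factor
  have hexp : ∀ p : ℝ × ℝ, HasDerivAt
      (fun s => Complex.exp (Complex.I * ((φ (p.1, s) : ℝ) : ℂ)))
      (Complex.exp (Complex.I * ((φ p : ℝ) : ℂ)) * (Complex.I * ((px φ p : ℝ) : ℂ))) p.2 := by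
    intro p
    simpa only [Prod.mk.eta] using (((Dφ p).ofReal_comp).const_mul Complex.I).cexp
  -- first x-derivative
  have hpx_u : px (fun p => (κ p : ℂ) * Complex.exp (Complex.I * (φ p : ℂ)))
      = fun p => (((px κ p : ℝ) : ℂ) + Complex.I * (((κ p : ℝ) : ℂ) * ((τ p : ℝ) : ℂ)))
          * Complex.exp (Complex.I * ((φ p : ℝ) : ℂ)) := by
    funext p
    have h := ((Dκ p).ofReal_comp).mul (hexp p)
    exact h.deriv.trans (by simp only [Prod.mk.eta]; rw [hφx p]; ring)
  -- second x-derivative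
  have hpx2_u : px (fun p => (((px κ p : ℝ) : ℂ) + Complex.I * (((κ p : ℝ) : ℂ) * ((τ p : ℝ) : ℂ)))
          * Complex.exp (Complex.I * ((φ p : ℝ) : ℂ)))
      = fun p => (((px (px κ) p : ℝ) : ℂ) - ((κ p : ℝ) : ℂ) * (((τ p : ℝ) : ℂ) * ((τ p : ℝ) : ℂ))
            + Complex.I * (2 * ((px κ p : ℝ) : ℂ) * ((τ p : ℝ) : ℂ)
              + ((κ p : ℝ) : ℂ) * ((px τ p : ℝ) : ℂ)))
          * Complex.exp (Complex.I * ((φ p : ℝ) : ℂ)) := by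
    funext p
    have h := (((Dκ1 p).ofReal_comp).add
        ((((Dκ p).ofReal_comp).mul ((Dτ p).ofReal_comp)).const_mul Complex.I)).mul (hexp p)
    refine h.deriv.trans ?_
    simp only [Prod.mk.eta, Pi.add_apply, Pi.mul_apply, Pi.sub_apply]
    rw [hφx p]
    linear_combination (((κ p : ℝ) : ℂ) * ((τ p : ℝ) : ℂ) ^ 2
      * Complex.exp (Complex.I * ((φ p : ℝ) : ℂ))) * Complex.I_sq
  -- third x-derivative
  have hpx3_u : px (fun p => (((px (px κ) p : ℝ) : ℂ)
            - ((κ p : ℝ) : ℂ) * (((τ p : ℝ) : ℂ) * ((τ p : ℝ) : ℂ))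
            + Complex.I * (2 * ((px κ p : ℝ) : ℂ) * ((τ p : ℝ) : ℂ)
              + ((κ p : ℝ) : ℂ) * ((px τ p : ℝ) : ℂ)))
          * Complex.exp (Complex.I * ((φ p : ℝ) : ℂ)))
      = fun p => (((px (px (px κ)) p : ℝ) : ℂ)
            - 3 * ((px κ p : ℝ) : ℂ) * (((τ p : ℝ) : ℂ) * ((τ p : ℝ) : ℂ))
            - 3 * ((κ p : ℝ) : ℂ) * ((τ p : ℝ) : ℂ) * ((px τ p : ℝ) : ℂ)
            + Complex.I * (3 * ((px (px κ) p : ℝ) : ℂ) * ((τ p : ℝ) : ℂ)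
              + 3 * ((px κ p : ℝ) : ℂ) * ((px τ p : ℝ) : ℂ)
              + ((κ p : ℝ) : ℂ) * ((px (px τ) p : ℝ) : ℂ)
              - ((κ p : ℝ) : ℂ) * (((τ p : ℝ) : ℂ) * ((τ p : ℝ) : ℂ) * ((τ p : ℝ) : ℂ))))
          * Complex.exp (Complex.I * ((φ p : ℝ) : ℂ)) := by
    funext p
    have h := ((((Dκ2 p).ofReal_comp).sub
        (((Dκ p).ofReal_comp).mul (((Dτ p).ofReal_comp).mul ((Dτ p).ofReal_comp)))).add
        (((((((Dκ1 p).ofReal_comp).const_mul (2 : ℂ)).mul ((Dτ p).ofReal_comp)).add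
          (((Dκ p).ofReal_comp).mul ((Dτ1 p).ofReal_comp))).const_mul Complex.I))).mul (hexp p)
    refine h.deriv.trans ?_
    simp only [Prod.mk.eta, Pi.add_apply, Pi.mul_apply, Pi.sub_apply]
    rw [hφx p]
    linear_combination ((2 * ((px κ p : ℝ) : ℂ) * ((τ p : ℝ) : ℂ) ^ 2
      + ((κ p : ℝ) : ℂ) * ((τ p : ℝ) : ℂ) * ((px τ p : ℝ) : ℂ))
      * Complex.exp (Complex.I * ((φ p : ℝ) : ℂ))) * Complex.I_sq
  -- t-derivative
  have hexpt : ∀ p : ℝ × ℝ, HasDerivAt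
      (fun s => Complex.exp (Complex.I * ((φ (s, p.2) : ℝ) : ℂ)))
      (Complex.exp (Complex.I * ((φ p : ℝ) : ℂ)) * (Complex.I * ((pt φ p : ℝ) : ℂ))) p.1 := by
    intro p
    simpa only [Prod.mk.eta] using (((Tφ p).ofReal_comp).const_mul Complex.I).cexp
  have hpt_u : pt (fun p => (κ p : ℂ) * Complex.exp (Complex.I * (φ p : ℂ)))
      = fun p => (((pt κ p : ℝ) : ℂ) + Complex.I * (((κ p : ℝ) : ℂ) * ((pt φ p : ℝ) : ℂ)))
          * Complex.exp (Complex.I * ((φ p : ℝ) : ℂ)) := by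
    funext p
    have h := ((Tκ p).ofReal_comp).mul (hexpt p)
    exact h.deriv.trans (by simp only [Prod.mk.eta]; ring)
  intro p
  rw [hpt_u, hpx_u, hpx2_u, hpx3_u]
  have habs : ‖(κ p : ℂ) * Complex.exp (Complex.I * (φ p : ℂ))‖ = κ p := by
    rw [norm_mul, Complex.norm_real, Real.norm_eq_abs, Complex.norm_exp, abs_of_pos (hκpos p)]
    simp [Complex.mul_re]
  have hprod : px (fun q => τ q * px κ q) p = px τ p * px κ p + τ p * px (px κ) p := by
    have h := (Dτ p).mul (Dκ1 p)
    exact h.deriv.trans (by simp only [Prod.mk.eta])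
  have hκt' : pt κ p = -(px (px (px κ)) p + (3 / 2) * ((κ p) ^ 2 - 2 * (τ p) ^ 2) * px κ p
      - 3 * κ p * τ p * px τ p) := by
    have := hκt p; linarith
  have hφt' := hφt p
  rw [hprod] at hφt'
  have ha : ((κ p : ℝ) : ℂ) ≠ 0 := by
    exact_mod_cast (hκpos p).ne'
  simp only [habs, hκt', hφt']
  push_cast
  field_simp
  ring
end
end

section
/- Let T, E₂, E₃ : ℝ² → ℝ³ be smooth (C^∞) maps of (t,x) that are orthonormal at every point with E₃ = T × E₂, and let u₂, u₃ : ℝ² → ℝ be smooth functions satisfying the parallel-frame Frenet equations ∂_x T = u₂ E₂ + u₃ E₃, ∂_x E₂ = -u₂ T, ∂_x E₃ = -u₃ T at every (t,x). Suppose the tangent vector evolves by the +2 flow ∂_t T = -(∂_x²u₂ + (1/2)(u₂² + u₃²)u₂) E₂ - (∂_x²u₃ + (1/2)(u₂² + u₃²)u₃) E₃. Then T satisfies the SO(3)-invariant mKdV spin model -∂_t T = ∂_x³ T + (3/2) ∂_x( |∂_x T|² T ). -/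
noncomputable section

/-- Euclidean dot product on `ℝ³`. -/
def dot3 (a b : Fin 3 → ℝ) : ℝ := a 0 * b 0 + a 1 * b 1 + a 2 * b 2

/-- Euclidean norm on `ℝ³`. -/
def norm3 (a : Fin 3 → ℝ) : ℝ := Real.sqrt (dot3 a a)

/-- Cross product on `ℝ³`. -/
def cross3 (a b : Fin 3 → ℝ) : Fin 3 → ℝ :=
  ![a 1 * b 2 - a 2 * b 1, a 2 * b 0 - a 0 * b 2, a 0 * b 1 - a 1 * b 0]

section Aux
variable {E : Type*} [NormedAddCommGroup E] [NormedSpace ℝ E]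

lemma slice_diff {f : ℝ × ℝ → E} (hf : ContDiff ℝ (⊤ : ℕ∞) f) (a : ℝ) :
    Differentiable ℝ (fun s => f (a, s)) :=
  (hf.comp (contDiff_const.prodMk contDiff_id)).differentiable (by simp)

lemma px_eq_fderiv {f : ℝ × ℝ → E} (hf : ContDiff ℝ (⊤ : ℕ∞) f) (p : ℝ × ℝ) :
    px f p = fderiv ℝ f p (0, 1) := by
  have h1 : HasDerivAt (fun s : ℝ => ((p.1, s) : ℝ × ℝ)) (0, 1) p.2 :=
    (hasDerivAt_const p.2 p.1).prodMk (hasDerivAt_id p.2)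
  have h2 : HasFDerivAt f (fderiv ℝ f p) p :=
    (hf.differentiable (by simp) p).hasFDerivAt
  exact (h2.comp_hasDerivAt p.2 h1).deriv

lemma px_smooth {f : ℝ × ℝ → E} (hf : ContDiff ℝ (⊤ : ℕ∞) f) :
    ContDiff ℝ (⊤ : ℕ∞) (px f) := by
  have : px f = fun p => fderiv ℝ f p (0, 1) := funext (px_eq_fderiv hf)
  rw [this]
  exact (hf.fderiv_right (by exact_mod_cast le_top)).clm_apply contDiff_const

lemma px_add {f g : ℝ × ℝ → E} (hf : ContDiff ℝ (⊤ : ℕ∞) f)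
    (hg : ContDiff ℝ (⊤ : ℕ∞) g) (p : ℝ × ℝ) :
    px (fun q => f q + g q) p = px f p + px g p := by
  show deriv (fun s => f (p.1, s) + g (p.1, s)) p.2 = _
  exact deriv_add (slice_diff hf p.1 p.2) (slice_diff hg p.1 p.2)

lemma px_smul {c : ℝ × ℝ → ℝ} {f : ℝ × ℝ → E} (hc : ContDiff ℝ (⊤ : ℕ∞) c)
    (hf : ContDiff ℝ (⊤ : ℕ∞) f) (p : ℝ × ℝ) :
    px (fun q => c q • f q) p = c p • px f p + px c p • f p := by
  show deriv (fun s => c (p.1, s) • f (p.1, s)) p.2 = _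
  exact deriv_smul (slice_diff hc p.1 p.2) (slice_diff hf p.1 p.2)

lemma px_neg {f : ℝ × ℝ → E} (p : ℝ × ℝ) :
    px (fun q => -f q) p = -px f p := by
  show deriv (fun s => -f (p.1, s)) p.2 = _
  exact deriv.neg

lemma px_sq {f : ℝ × ℝ → ℝ} (hf : ContDiff ℝ (⊤ : ℕ∞) f) (p : ℝ × ℝ) :
    px (fun q => f q ^ 2) p = 2 * f p * px f p := by
  have h : (fun q => f q ^ 2) = fun q => f q • f q := by
    funext q; simp [sq]
  rw [h, px_smul hf hf p]; simp [smul_eq_mul]; ring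

end Aux

/-- In a parallel frame, the +2 flow yields the SO(3)-invariant mKdV spin model
`-T_t = T_xxx + (3/2)(|T_x|² T)_x`. -/
theorem plus_two_flow_mkdv_spin_model
    (T E₂ E₃ : ℝ × ℝ → Fin 3 → ℝ) (u₂ u₃ : ℝ × ℝ → ℝ)
    (hT : ContDiff ℝ (⊤ : ℕ∞) T) (hE₂ : ContDiff ℝ (⊤ : ℕ∞) E₂)
    (hE₃ : ContDiff ℝ (⊤ : ℕ∞) E₃)
    (hu₂ : ContDiff ℝ (⊤ : ℕ∞) u₂) (hu₃ : ContDiff ℝ (⊤ : ℕ∞) u₃)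
    (horthTT : ∀ p, dot3 (T p) (T p) = 1)
    (horth22 : ∀ p, dot3 (E₂ p) (E₂ p) = 1)
    (horth33 : ∀ p, dot3 (E₃ p) (E₃ p) = 1)
    (horthT2 : ∀ p, dot3 (T p) (E₂ p) = 0)
    (horthT3 : ∀ p, dot3 (T p) (E₃ p) = 0)
    (horth23 : ∀ p, dot3 (E₂ p) (E₃ p) = 0)
    (hE₃def : ∀ p, E₃ p = cross3 (T p) (E₂ p))
    (hTx : ∀ p, px T p = u₂ p • E₂ p + u₃ p • E₃ p)
    (hE₂x : ∀ p, px E₂ p = (-u₂ p) • T p)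
    (hE₃x : ∀ p, px E₃ p = (-u₃ p) • T p)
    (hTt : ∀ p, pt T p
      = (-(px (px u₂) p + (1 / 2) * ((u₂ p) ^ 2 + (u₃ p) ^ 2) * u₂ p)) • E₂ p
        - (px (px u₃) p + (1 / 2) * ((u₂ p) ^ 2 + (u₃ p) ^ 2) * u₃ p) • E₃ p) :
    ∀ p, -pt T p
      = px (px (px T)) p
        + (3 / 2 : ℝ) • px (fun q => (norm3 (px T q)) ^ 2 • T q) p := by
  intro p
  -- smoothness of various pieces
  have h2x : ContDiff ℝ (⊤ : ℕ∞) (px u₂) := px_smooth hu₂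
  have h3x : ContDiff ℝ (⊤ : ℕ∞) (px u₃) := px_smooth hu₃
  have hsq : ContDiff ℝ (⊤ : ℕ∞) (fun q => u₂ q ^ 2 + u₃ q ^ 2) :=
    (hu₂.pow 2).add (hu₃.pow 2)
  have hsqneg : ContDiff ℝ (⊤ : ℕ∞) (fun q => -(u₂ q ^ 2 + u₃ q ^ 2)) := hsq.neg
  -- first derivative as a function
  have hTxfun : px T = fun q => u₂ q • E₂ q + u₃ q • E₃ q := funext hTx
  -- px of the squared-norm coefficient
  have hsqx : ∀ q, px (fun q => u₂ q ^ 2 + u₃ q ^ 2) q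
      = 2 * u₂ q * px u₂ q + 2 * u₃ q * px u₃ q := by
    intro q
    rw [px_add (hu₂.pow 2) (hu₃.pow 2), px_sq hu₂, px_sq hu₃]
  -- second derivative
  have hTxx : ∀ q, px (px T) q
      = (-(u₂ q ^ 2 + u₃ q ^ 2)) • T q + px u₂ q • E₂ q + px u₃ q • E₃ q := by
    intro q
    rw [hTxfun,
      px_add (f := fun q => u₂ q • E₂ q) (g := fun q => u₃ q • E₃ q)
        (hu₂.smul hE₂) (hu₃.smul hE₃),
      px_smul hu₂ hE₂, px_smul hu₃ hE₃, hE₂x, hE₃x]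
    module
  have hTxxfun : px (px T)
      = fun q => (-(u₂ q ^ 2 + u₃ q ^ 2)) • T q + px u₂ q • E₂ q + px u₃ q • E₃ q :=
    funext hTxx
  -- third derivative at p
  have hTxxx : px (px (px T)) p
      = (-(3 * u₂ p * px u₂ p + 3 * u₃ p * px u₃ p)) • T p
        + (px (px u₂) p - (u₂ p ^ 2 + u₃ p ^ 2) * u₂ p) • E₂ p
        + (px (px u₃) p - (u₂ p ^ 2 + u₃ p ^ 2) * u₃ p) • E₃ p := by
    rw [hTxxfun,
      px_add (f := fun q => (-(u₂ q ^ 2 + u₃ q ^ 2)) • T q + px u₂ q • E₂ q)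
        (g := fun q => px u₃ q • E₃ q)
        ((hsqneg.smul hT).add (h2x.smul hE₂)) (h3x.smul hE₃),
      px_add (f := fun q => (-(u₂ q ^ 2 + u₃ q ^ 2)) • T q)
        (g := fun q => px u₂ q • E₂ q) (hsqneg.smul hT) (h2x.smul hE₂),
      px_smul hsqneg hT, px_smul h2x hE₂, px_smul h3x hE₃,
      px_neg (f := fun q => u₂ q ^ 2 + u₃ q ^ 2), hsqx,
      hTx p, hE₂x p, hE₃x p]
    module
  -- squared norm of T_x
  have hnorm : (fun q => (norm3 (px T q)) ^ 2 • T q)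
      = fun q => (u₂ q ^ 2 + u₃ q ^ 2) • T q := by
    funext q
    congr 1
    have hd : dot3 (px T q) (px T q) = u₂ q ^ 2 + u₃ q ^ 2 := by
      have h22 := horth22 q; have h33 := horth33 q; have h23 := horth23 q
      rw [hTx q]
      simp only [dot3, Pi.add_apply, Pi.smul_apply, smul_eq_mul] at *
      linear_combination (u₂ q ^ 2) * h22 + (u₃ q ^ 2) * h33 + (2 * u₂ q * u₃ q) * h23
    have hpos : 0 ≤ dot3 (px T q) (px T q) := by
      rw [hd]; positivity
    rw [norm3, Real.sq_sqrt hpos, hd]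
  -- derivative of the norm term
  have hnx : px (fun q => (norm3 (px T q)) ^ 2 • T q) p
      = (u₂ p ^ 2 + u₃ p ^ 2) • (u₂ p • E₂ p + u₃ p • E₃ p)
        + (2 * u₂ p * px u₂ p + 2 * u₃ p * px u₃ p) • T p := by
    rw [hnorm, px_smul hsq hT, hsqx, hTx p]
  rw [hTt p, hTxxx, hnx]
  module
end
end
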